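/- ▲-bisimilarity is an equivalence relation on pointed Kripke models: it is reflexive, symmetric, and transitive. -/

import Mathlib

structure Model where
  W : Type
  ne : Nonempty W
  R : W → W → Prop
  V : ℕ → W → Prop

/-- Disjoint union of two models. -/
def dsum (M N : Model) : Model where
  W := M.W ⊕ N.W
  ne := ⟨Sum.inl M.ne.some⟩
  R := fun a b =>
    match a, b with
    | .inl x, .inl y => M.R x y
    | .inr x, .inr y => N.R x y
    | _, _ => False
  V := fun n => Sum.elim (M.V n) (N.V n)

/-- Z is a ▲-bisimulation on the model M. -/
def IsTriBisim (M : Model) (Z : M.W → M.W → Prop) : Prop :=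
  (∃ a b, Z a b) ∧
  ∀ s s', Z s s' →
    (∀ n, M.V n s ↔ M.V n s') ∧
    (∀ t, M.R s t → ¬ Z s t → ∃ t', M.R s' t' ∧ Z t t') ∧
    (∀ t', M.R s' t' → ¬ Z s' t' → ∃ t, M.R s t ∧ Z t t')

/-- (M,s) and (N,t) are ▲-bisimilar. -/
def TriBisimilar (M : Model) (s : M.W) (N : Model) (t : N.W) : Prop :=
  ∃ Z, IsTriBisim (dsum M N) Z ∧ Z (.inl s) (.inr t)

open Relation

/-- The main ▲-bisimulation property (without the nonemptiness clause). -/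
def BisimProp (M : Model) (Z : M.W → M.W → Prop) : Prop :=
  ∀ s s', Z s s' →
    (∀ n, M.V n s ↔ M.V n s') ∧
    (∀ t, M.R s t → ¬ Z s t → ∃ t', M.R s' t' ∧ Z t t') ∧
    (∀ t', M.R s' t' → ¬ Z s' t' → ∃ t, M.R s t ∧ Z t t')

lemma bisimProp_union {M : Model} {Z₁ Z₂ : M.W → M.W → Prop}
    (h1 : BisimProp M Z₁) (h2 : BisimProp M Z₂) :
    BisimProp M (fun a b => Z₁ a b ∨ Z₂ a b) := by
  rintro s s' (h | h)
  · obtain ⟨hv, hf, hb⟩ := h1 s s' h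
    refine ⟨hv, fun t ht hnt => ?_, fun t ht hnt => ?_⟩
    · obtain ⟨t', h1', h2'⟩ := hf t ht (fun c => hnt (Or.inl c))
      exact ⟨t', h1', Or.inl h2'⟩
    · obtain ⟨t', h1', h2'⟩ := hb t ht (fun c => hnt (Or.inl c))
      exact ⟨t', h1', Or.inl h2'⟩
  · obtain ⟨hv, hf, hb⟩ := h2 s s' h
    refine ⟨hv, fun t ht hnt => ?_, fun t ht hnt => ?_⟩
    · obtain ⟨t', h1', h2'⟩ := hf t ht (fun c => hnt (Or.inr c))
      exact ⟨t', h1', Or.inr h2'⟩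
    · obtain ⟨t', h1', h2'⟩ := hb t ht (fun c => hnt (Or.inr c))
      exact ⟨t', h1', Or.inr h2'⟩

lemma bisimProp_eqvGen {M : Model} {Z : M.W → M.W → Prop}
    (h : BisimProp M Z) : BisimProp M (EqvGen Z) := by
  suffices H : ∀ a b, EqvGen Z a b →
      ((∀ n, M.V n a ↔ M.V n b) ∧
       (∀ t, M.R a t → ¬ EqvGen Z a t → ∃ t', M.R b t' ∧ EqvGen Z t t') ∧
       (∀ t, M.R b t → ¬ EqvGen Z b t → ∃ t', M.R a t' ∧ EqvGen Z t t')) by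
    intro s s' hE
    obtain ⟨hv, hf, hb⟩ := H s s' hE
    refine ⟨hv, hf, fun t' ht hnt => ?_⟩
    obtain ⟨t0, h1', h2'⟩ := hb t' ht hnt
    exact ⟨t0, h1', EqvGen.symm _ _ h2'⟩
  intro a b hE
  induction hE with
  | rel a b hab =>
      obtain ⟨hv, hf, hb⟩ := h a b hab
      refine ⟨hv, fun t ht hnt => ?_, fun t ht hnt => ?_⟩
      · obtain ⟨t', h1', h2'⟩ := hf t ht (fun c => hnt (EqvGen.rel _ _ c))
        exact ⟨t', h1', EqvGen.rel _ _ h2'⟩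
      · obtain ⟨t', h1', h2'⟩ := hb t ht (fun c => hnt (EqvGen.rel _ _ c))
        exact ⟨t', h1', EqvGen.symm _ _ (EqvGen.rel _ _ h2')⟩
  | refl a =>
      exact ⟨fun n => Iff.rfl, fun t ht _ => ⟨t, ht, EqvGen.refl t⟩,
        fun t ht _ => ⟨t, ht, EqvGen.refl t⟩⟩
  | symm a b hab ih =>
      exact ⟨fun n => (ih.1 n).symm, ih.2.2, ih.2.1⟩
  | trans a b c hab hbc ih1 ih2 =>
      refine ⟨fun n => (ih1.1 n).trans (ih2.1 n), fun t ht hnt => ?_, fun t ht hnt => ?_⟩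
      · obtain ⟨t1, hR1, hE1⟩ := ih1.2.1 t ht hnt
        have hg : ¬ EqvGen Z b t1 := fun c =>
          hnt (EqvGen.trans _ _ _ hab (EqvGen.trans _ _ _ c (EqvGen.symm _ _ hE1)))
        obtain ⟨t2, hR2, hE2⟩ := ih2.2.1 t1 hR1 hg
        exact ⟨t2, hR2, EqvGen.trans _ _ _ hE1 hE2⟩
      · obtain ⟨t1, hR1, hE1⟩ := ih2.2.2 t ht hnt
        have hg : ¬ EqvGen Z b t1 := fun c =>
          hnt (EqvGen.trans _ _ _ (EqvGen.symm _ _ hbc)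
            (EqvGen.trans _ _ _ c (EqvGen.symm _ _ hE1)))
        obtain ⟨t2, hR2, hE2⟩ := ih1.2.2 t1 hR1 hg
        exact ⟨t2, hR2, EqvGen.trans _ _ _ hE1 hE2⟩

/-- Pull a ▲-bisimulation back along a map that respects V and R and whose
image is closed under R. -/
lemma bisimProp_pullback {M M' : Model} (f : M'.W → M.W)
    (hV : ∀ n a, M'.V n a ↔ M.V n (f a))
    (hR : ∀ a b, M'.R a b ↔ M.R (f a) (f b))
    (hcl : ∀ a t, M.R (f a) t → ∃ b, f b = t)
    {Z : M.W → M.W → Prop} (h : BisimProp M Z) :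
    BisimProp M' (fun a b => Z (f a) (f b)) := by
  intro s s' hZ
  obtain ⟨hv, hf, hb⟩ := h (f s) (f s') hZ
  refine ⟨fun n => (hV n s).trans ((hv n).trans (hV n s').symm),
    fun t ht hnt => ?_, fun t ht hnt => ?_⟩
  · obtain ⟨t', hR', hZ'⟩ := hf (f t) ((hR s t).mp ht) hnt
    obtain ⟨t0, ht0⟩ := hcl s' t' hR'
    refine ⟨t0, (hR s' t0).mpr (ht0 ▸ hR'), ?_⟩
    simpa [ht0] using hZ'
  · obtain ⟨t', hR', hZ'⟩ := hb (f t) ((hR s' t).mp ht) hnt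
    obtain ⟨t0, ht0⟩ := hcl s t' hR'
    refine ⟨t0, (hR s t0).mpr (ht0 ▸ hR'), ?_⟩
    simpa [ht0] using hZ'

/-- Push a ▲-bisimulation forward along a map that respects V and R and whose
image is closed under R. -/
lemma bisimProp_pushforward {M M' : Model} (f : M'.W → M.W)
    (hV : ∀ n a, M'.V n a ↔ M.V n (f a))
    (hR : ∀ a b, M'.R a b ↔ M.R (f a) (f b))
    (hcl : ∀ a t, M.R (f a) t → ∃ b, f b = t)
    {Z : M'.W → M'.W → Prop} (h : BisimProp M' Z) :
    BisimProp M (fun a b => ∃ x y, f x = a ∧ f y = b ∧ Z x y) := by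
  rintro s s' ⟨x, y, rfl, rfl, hZ⟩
  obtain ⟨hv, hf, hb⟩ := h x y hZ
  refine ⟨fun n => ((hV n x).symm.trans (hv n)).trans (hV n y),
    fun t ht hnt => ?_, fun t ht hnt => ?_⟩
  · obtain ⟨t0, rfl⟩ := hcl x t ht
    obtain ⟨t', hR', hZ'⟩ := hf t0 ((hR x t0).mpr ht)
      (fun c => hnt ⟨x, t0, rfl, rfl, c⟩)
    exact ⟨f t', (hR y t').mp hR', t0, t', rfl, rfl, hZ'⟩
  · obtain ⟨t0, rfl⟩ := hcl y t ht
    obtain ⟨t', hR', hZ'⟩ := hb t0 ((hR y t0).mpr ht)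
      (fun c => hnt ⟨y, t0, rfl, rfl, c⟩)
    exact ⟨f t', (hR x t').mp hR', t', t0, rfl, rfl, hZ'⟩

theorem stmt12 :
    (∀ (M : Model) (s : M.W), TriBisimilar M s M s) ∧
    (∀ (M N : Model) (s : M.W) (t : N.W),
        TriBisimilar M s N t → TriBisimilar N t M s) ∧
    (∀ (M N O : Model) (s : M.W) (t : N.W) (u : O.W),
        TriBisimilar M s N t → TriBisimilar N t O u → TriBisimilar M s O u) := by
  refine ⟨?_, ?_, ?_⟩
  · -- reflexivity
    intro M s
    refine ⟨fun a b => b = Sum.swap a, ⟨⟨.inl s, .inr s, rfl⟩, ?_⟩, rfl⟩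
    rintro a _ rfl
    refine ⟨?_, fun t ht _ => ⟨Sum.swap t, ?_, rfl⟩, fun t ht _ => ⟨Sum.swap t, ?_, ?_⟩⟩
    · intro n; cases a <;> simp [dsum]
    · cases a <;> cases t <;> simp_all [dsum]
    · cases a <;> cases t <;> simp_all [dsum]
    · cases t <;> rfl
  · -- symmetry
    rintro M N s t ⟨Z, ⟨-, hprop⟩, hst⟩
    have hE := bisimProp_eqvGen (M := dsum M N) hprop
    refine ⟨fun a b => EqvGen Z (Sum.swap a) (Sum.swap b),
      ⟨⟨.inl t, .inr s, ?_⟩, ?_⟩, ?_⟩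
    · exact EqvGen.symm _ _ (EqvGen.rel _ _ hst)
    · refine bisimProp_pullback (show (dsum N M).W → (dsum M N).W from Sum.swap) ?_ ?_ ?_ hE
      · intro n a; cases a <;> simp [dsum]
      · intro a b; cases a <;> cases b <;> simp [dsum]
      · intro a v hv; exact ⟨Sum.swap v, Sum.swap_swap v⟩
    · exact EqvGen.symm _ _ (EqvGen.rel _ _ hst)
  · -- transitivity
    rintro M N O s t u ⟨Z₁, ⟨-, h1⟩, hst⟩ ⟨Z₂, ⟨-, h2⟩, htu⟩
    -- work in the triple sum T = (M ⊕ N) ⊕ O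
    have hL1 : BisimProp (dsum (dsum M N) O)
        (fun a b => ∃ x y, Sum.inl x = a ∧ Sum.inl y = b ∧ Z₁ x y) := by
      refine bisimProp_pushforward (show (dsum M N).W → (dsum (dsum M N) O).W from Sum.inl) ?_ ?_ ?_ h1
      · intro n a; cases a <;> simp [dsum]
      · intro a b; cases a <;> cases b <;> simp [dsum]
      · rintro a (c | c) hc
        · exact ⟨c, rfl⟩
        · cases a <;> simp [dsum] at hc
    have hL2 : BisimProp (dsum (dsum M N) O)
        (fun a b => ∃ x y,
          Sum.elim (fun y => Sum.inl (Sum.inr y)) Sum.inr x = a ∧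
          Sum.elim (fun y => Sum.inl (Sum.inr y)) Sum.inr y = b ∧ Z₂ x y) := by
      refine bisimProp_pushforward (show (dsum N O).W → (dsum (dsum M N) O).W from Sum.elim (fun y => Sum.inl (Sum.inr y)) Sum.inr)
        ?_ ?_ ?_ h2
      · intro n a; cases a <;> simp [dsum]
      · intro a b; cases a <;> cases b <;> simp [dsum]
      · rintro (a | a) ((c | c) | c) hc
        · simp [dsum] at hc
        · exact ⟨.inl c, rfl⟩
        · simp [dsum] at hc
        · simp [dsum] at hc
        · simp [dsum] at hc
        · exact ⟨.inr c, rfl⟩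
    have hEp := bisimProp_eqvGen (bisimProp_union hL1 hL2)
    have hwit : EqvGen (fun a b =>
        (∃ x y, Sum.inl x = a ∧ Sum.inl y = b ∧ Z₁ x y) ∨
        (∃ x y,
          Sum.elim (fun y => Sum.inl (Sum.inr y)) Sum.inr x = a ∧
          Sum.elim (fun y => Sum.inl (Sum.inr y)) Sum.inr y = b ∧ Z₂ x y))
        (Sum.inl (Sum.inl s)) (Sum.inr u) := by
      refine EqvGen.trans _ (Sum.inl (Sum.inr t)) _ ?_ ?_
      · exact EqvGen.rel _ _ (Or.inl ⟨.inl s, .inr t, rfl, rfl, hst⟩)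
      · exact EqvGen.rel _ _ (Or.inr ⟨.inl t, .inr u, rfl, rfl, htu⟩)
    refine ⟨fun a b => EqvGen _
        (Sum.elim (fun x => Sum.inl (Sum.inl x)) Sum.inr a)
        (Sum.elim (fun x => Sum.inl (Sum.inl x)) Sum.inr b),
      ⟨⟨.inl s, .inr u, hwit⟩, ?_⟩, hwit⟩
    refine bisimProp_pullback (show (dsum M O).W → (dsum (dsum M N) O).W from Sum.elim (fun x => Sum.inl (Sum.inl x)) Sum.inr)
      ?_ ?_ ?_ hEp
    · intro n a; cases a <;> simp [dsum]
    · intro a b; cases a <;> cases b <;> simp [dsum]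
    · rintro (a | a) ((c | c) | c) hc
      · exact ⟨.inl c, rfl⟩
      · simp [dsum] at hc
      · simp [dsum] at hc
      · simp [dsum] at hc
      · simp [dsum] at hc
      · exact ⟨.inr c, rfl⟩
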